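/- arXiv:1601.00458 — 2 statements merged into one kernel-verified Lean document; each statement's English description precedes it below -/
import Mathlib

section
/- Let 𝔤 be a finite-dimensional complex Lie algebra and D a derivation of 𝔤. Then the sum 𝔤⁺ of all generalized eigenspaces of D corresponding to eigenvalues with positive real part is a nilpotent Lie subalgebra of 𝔤. -/
open Module

section Aux

variable {L : Type*} [LieRing L] [LieAlgebra ℂ L]

private lemma deriv_step (D : LieDerivation ℂ L L) (α β : ℂ) (x y : L) :
    (D.toLinearMap - (α + β) • 1) ⁅x, y⁆ =
      ⁅(D.toLinearMap - α • 1) x, y⁆ + ⁅x, (D.toLinearMap - β • 1) y⁆ := by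
  have h : D.toLinearMap ⁅x, y⁆ = ⁅x, D.toLinearMap y⁆ + ⁅D.toLinearMap x, y⁆ := by
    simp only [LieDerivation.coeFn_coe]
    exact D.apply_lie_eq_add x y
  simp only [LinearMap.sub_apply, LinearMap.smul_apply, Module.End.one_apply, h, sub_lie,
    lie_sub, smul_lie, lie_smul]
  module

private lemma deriv_pow_lie (D : LieDerivation ℂ L L) (α β : ℂ) :
    ∀ n k l : ℕ, k + l = n + 1 → ∀ a b : L,
      ((D.toLinearMap - α • 1) ^ k) a = 0 → ((D.toLinearMap - β • 1) ^ l) b = 0 →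
      ((D.toLinearMap - (α + β) • 1) ^ n) ⁅a, b⁆ = 0 := by
  intro n
  induction n with
  | zero =>
    intro k l hkl a b ha hb
    rw [pow_zero, Module.End.one_apply]
    match k, l, hkl with
    | 0, _, _ =>
      rw [pow_zero, Module.End.one_apply] at ha
      rw [ha, zero_lie]
    | (k + 1), 0, _ =>
      rw [pow_zero, Module.End.one_apply] at hb
      rw [hb, lie_zero]
    | (k + 1), (l + 1), h => exact absurd h (by omega)
  | succ n ih =>
    intro k l hkl a b ha hb
    match k, l, hkl with
    | 0, _, _ =>
      rw [pow_zero, Module.End.one_apply] at ha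
      rw [ha, zero_lie, map_zero]
    | _, 0, _ =>
      rw [pow_zero, Module.End.one_apply] at hb
      rw [hb, lie_zero, map_zero]
    | (k + 1), (l + 1), hkl =>
      rw [pow_succ, Module.End.mul_apply, deriv_step D α β a b, map_add]
      have h1 : ((D.toLinearMap - (α + β) • 1) ^ n) ⁅(D.toLinearMap - α • 1) a, b⁆ = 0 := by
        refine ih k (l + 1) (by omega) _ _ ?_ hb
        rw [pow_succ, Module.End.mul_apply] at ha
        exact ha
      have h2 : ((D.toLinearMap - (α + β) • 1) ^ n) ⁅a, (D.toLinearMap - β • 1) b⁆ = 0 := by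
        refine ih (k + 1) l (by omega) _ _ ha ?_
        rw [pow_succ, Module.End.mul_apply] at hb
        exact hb
      rw [h1, h2, add_zero]

private lemma lie_mem_maxGen (D : LieDerivation ℂ L L) {α β : ℂ} {a b : L}
    (ha : a ∈ Module.End.maxGenEigenspace D.toLinearMap α)
    (hb : b ∈ Module.End.maxGenEigenspace D.toLinearMap β) :
    ⁅a, b⁆ ∈ Module.End.maxGenEigenspace D.toLinearMap (α + β) := by
  rw [Module.End.mem_maxGenEigenspace] at ha hb ⊢
  obtain ⟨k, hk⟩ := ha
  obtain ⟨l, hl⟩ := hb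
  refine ⟨k + l, deriv_pow_lie D α β (k + l) (k + 1) l (by omega) a b ?_ hl⟩
  rw [pow_succ', Module.End.mul_apply, hk, map_zero]

end Aux

/-- The sum `𝔤⁺` of the generalized eigenspaces of a derivation `D` for eigenvalues with
positive real part is a nilpotent Lie subalgebra. -/
theorem stmt_1 (L : Type*) [LieRing L] [LieAlgebra ℂ L] [FiniteDimensional ℂ L]
    (D : LieDerivation ℂ L L) :
    ∃ K : LieSubalgebra ℂ L,
      (K.toSubmodule = ⨆ (α : ℂ) (_ : 0 < α.re),
          Module.End.maxGenEigenspace D.toLinearMap α) ∧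
      LieRing.IsNilpotent K := by
  set E := D.toLinearMap with hE
  set P : Submodule ℂ L := ⨆ (α : ℂ) (_ : 0 < α.re), Module.End.maxGenEigenspace E α with hP
  -- `P` is closed under the bracket
  have hPle : ∀ {α : ℂ}, 0 < α.re → Module.End.maxGenEigenspace E α ≤ P := fun {α} hα =>
    le_iSup₂ (f := fun α (_ : 0 < α.re) => Module.End.maxGenEigenspace E α) α hα
  have hclosed : ∀ a ∈ P, ∀ b ∈ P, ⁅a, b⁆ ∈ P := by
    have key : ∀ (α : ℂ), 0 < α.re → ∀ a ∈ Module.End.maxGenEigenspace E α, ∀ b ∈ P, ⁅a, b⁆ ∈ P := by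
      intro α hα a ha b hb
      rw [hP, iSup_subtype'] at hb
      induction hb using Submodule.iSup_induction' with
      | mem β b hbmem =>
        exact hPle (by simpa [Complex.add_re] using add_pos hα β.2)
          (lie_mem_maxGen D ha hbmem)
      | zero => simp only [lie_zero]; exact P.zero_mem
      | add y z _ _ hy hz => rw [lie_add]; exact P.add_mem hy hz
    intro a ha
    rw [hP, iSup_subtype'] at ha
    induction ha using Submodule.iSup_induction' with
    | mem α a hamem => exact key α α.2 a hamem
    | zero => intro b _; simp only [zero_lie]; exact P.zero_mem
    | add y z _ _ hy hz =>
      intro b hb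
      rw [add_lie]; exact P.add_mem (hy b hb) (hz b hb)
  let K : LieSubalgebra ℂ L :=
    { P with lie_mem' := fun {x y} hx hy => hclosed x hx y hy }
  -- the set of relevant eigenvalues is finite
  have hind := Module.End.independent_maxGenEigenspace E
  have hfin : {α : ℂ | Module.End.maxGenEigenspace E α ≠ ⊥}.Finite :=
    WellFoundedGT.finite_ne_bot_of_iSupIndep hind
  set S : Set ℂ := {α : ℂ | 0 < α.re ∧ Module.End.maxGenEigenspace E α ≠ ⊥} with hS
  have hSfin : S.Finite := hfin.subset fun α hα => hα.2
  -- main claim: a uniform nilpotency bound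
  have main : ∃ n : ℕ, ∀ x ∈ P, ∀ y ∈ P, ((LieAlgebra.ad ℂ L x) ^ n) y = 0 := by
    by_cases hne : hSfin.toFinset.Nonempty
    · set δ : ℝ := hSfin.toFinset.inf' hne (fun α => α.re) with hδ
      set r : ℝ := hSfin.toFinset.sup' hne (fun α => α.re) with hr
      have hδpos : 0 < δ := by
        rw [hδ, Finset.lt_inf'_iff]
        intro α hα
        exact ((hSfin.mem_toFinset).mp hα).1
      obtain ⟨n, hn⟩ := exists_nat_gt (r / δ)
      have hrn : r < n * δ := by
        rwa [div_lt_iff₀ hδpos] at hn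
      -- the filtered spaces
      set Q : ℝ → Submodule ℂ L :=
        fun t => ⨆ (α : ℂ) (_ : 0 < α.re ∧ t ≤ α.re), Module.End.maxGenEigenspace E α with hQ
      have hQle : ∀ {t : ℝ} {α : ℂ}, 0 < α.re → t ≤ α.re → Module.End.maxGenEigenspace E α ≤ Q t :=
        fun {t α} h1 h2 =>
          le_iSup₂ (f := fun α (_ : 0 < α.re ∧ t ≤ α.re) => Module.End.maxGenEigenspace E α) α ⟨h1, h2⟩
      have hPQ : P ≤ Q 0 := by
        refine iSup₂_le fun α hα => hQle hα hα.le
      -- bracket shift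
      have shift : ∀ (t : ℝ), ∀ x ∈ P, ∀ y ∈ Q t, ⁅x, y⁆ ∈ Q (t + δ) := by
        intro t
        have key : ∀ (α : ℂ), 0 < α.re → ∀ a ∈ Module.End.maxGenEigenspace E α,
            ∀ b ∈ Q t, ⁅a, b⁆ ∈ Q (t + δ) := by
          intro α hα a ha b hb
          have hQt : Q t = ⨆ (β : ℂ) (_ : 0 < β.re ∧ t ≤ β.re),
              Module.End.maxGenEigenspace E β := rfl
          rw [hQt, iSup_subtype'] at hb
          induction hb using Submodule.iSup_induction' with
          | mem β b hbmem =>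
            by_cases hab : ⁅a, b⁆ = 0
            · rw [hab]; exact (Q (t + δ)).zero_mem
            · have ha0 : a ≠ 0 := fun h => hab (by rw [h, zero_lie])
              have hαS : α ∈ S := ⟨hα, fun h => ha0 (by simpa [h] using ha)⟩
              have hδα : δ ≤ α.re :=
                Finset.inf'_le _ (hSfin.mem_toFinset.mpr hαS)
              refine hQle (α := α + β.1) ?_ ?_ (lie_mem_maxGen D ha hbmem)
              · simp only [Complex.add_re]
                exact add_pos hα β.2.1
              · simp only [Complex.add_re]
                have := β.2.2
                linarith
          | zero => simp only [lie_zero]; exact (Q (t + δ)).zero_mem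
          | add y z _ _ hy hz => rw [lie_add]; exact (Q (t + δ)).add_mem hy hz
        intro x hx y hy
        rw [hP, iSup_subtype'] at hx
        induction hx using Submodule.iSup_induction' with
        | mem α a hamem => exact key α α.2 a hamem y hy
        | zero => simp only [zero_lie]; exact (Q (t + δ)).zero_mem
        | add y' z _ _ hy' hz => rw [add_lie]; exact (Q (t + δ)).add_mem hy' hz
      -- iterate
      have iter : ∀ x ∈ P, ∀ k : ℕ, ∀ y ∈ Q 0, ((LieAlgebra.ad ℂ L x) ^ k) y ∈ Q (k * δ) := by
        intro x hx k
        induction k with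
        | zero => intro y hy; simpa using hy
        | succ k ih =>
          intro y hy
          have h1 : ((LieAlgebra.ad ℂ L x) ^ (k + 1)) y =
              ⁅x, ((LieAlgebra.ad ℂ L x) ^ k) y⁆ := by
            rw [pow_succ', Module.End.mul_apply]; rfl
          rw [h1]
          have h2 := shift (k * δ) x hx _ (ih y hy)
          have h3 : ((k : ℝ) + 1) * δ = k * δ + δ := by ring
          rw [Nat.cast_add, Nat.cast_one, h3]
          exact h2
      -- the target space is trivial
      have hQbot : Q (n * δ) = ⊥ := by
        rw [hQ]
        refine le_bot_iff.mp (iSup₂_le fun α hα => ?_)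
        by_cases hg : Module.End.maxGenEigenspace E α = ⊥
        · rw [hg]
        · exfalso
          have hαS : α ∈ S := ⟨hα.1, hg⟩
          have : α.re ≤ r := Finset.le_sup' _ (hSfin.mem_toFinset.mpr hαS)
          have := hα.2
          linarith
      refine ⟨n, fun x hx y hy => ?_⟩
      have := iter x hx n y (hPQ hy)
      rwa [hQbot, Submodule.mem_bot] at this
    · -- S empty: P = ⊥
      have hPbot : P = ⊥ := by
        rw [hP]
        refine le_bot_iff.mp (iSup₂_le fun α hα => ?_)
        by_cases hg : Module.End.maxGenEigenspace E α = ⊥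
        · rw [hg]
        · exact absurd ⟨α, hSfin.mem_toFinset.mpr ⟨hα, hg⟩⟩ hne
      refine ⟨1, fun x hx y hy => ?_⟩
      rw [hPbot, Submodule.mem_bot] at hy
      simp [hy]
  obtain ⟨n, hn⟩ := main
  refine ⟨K, rfl, ?_⟩
  rw [LieAlgebra.isNilpotent_iff_forall (R := ℂ)]
  intro x
  have hcoe : ∀ (k : ℕ) (y : K),
      (((LieAlgebra.ad ℂ K x) ^ k) y : L) = ((LieAlgebra.ad ℂ L (x : L)) ^ k) (y : L) := by
    intro k
    induction k with
    | zero => intro y; simp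
    | succ k ih =>
      intro y
      rw [pow_succ', pow_succ', Module.End.mul_apply, Module.End.mul_apply, ← ih y]
      rfl
  refine ⟨n, LinearMap.ext fun y => Subtype.ext ?_⟩
  show (((LieAlgebra.ad ℂ K x) ^ n) y : L) = (((0 : Module.End ℂ K) y : K) : L)
  rw [hcoe n y, hn (x : L) x.2 (y : L) y.2]
  simp
end

section
/- Let D be a derivation of a finite-dimensional real Lie algebra 𝔤 and for each eigenvalue α of the complexification of D with Re(α) = 0 and α ≠ 0, let 𝔤^α := ⊕_{j ≥ 1} 𝔤_{jα} (sum of generalized eigenspaces of positive integer multiples of α). Then 𝔤^α is a nilpotent Lie subalgebra of 𝔤 (working in the complexification). -/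
open Finset TensorProduct in
/-- Key bracket relation between generalized eigenspaces of a Lie derivation. -/
lemma aux_lie_mem_maxGenEigenspace {R L : Type*} [CommRing R] [LieRing L] [LieAlgebra R L]
    (D : LieDerivation R L L) {χ₁ χ₂ : R} {x y : L}
    (hx : x ∈ Module.End.maxGenEigenspace (D.toLinearMap : Module.End R L) χ₁)
    (hy : y ∈ Module.End.maxGenEigenspace (D.toLinearMap : Module.End R L) χ₂) :
    ⁅x, y⁆ ∈ Module.End.maxGenEigenspace (D.toLinearMap : Module.End R L) (χ₁ + χ₂) := by
  set f : Module.End R L := D.toLinearMap with hf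
  let g : L ⊗[R] L →ₗ[R] L := by
    letI : LieRing (Module.End R L) := LieRing.ofAssociativeRing
    exact TensorProduct.lift (LieModule.toEnd R L L).toLinearMap
  have hg : ∀ a b : L, g (a ⊗ₜ b) = ⁅a, b⁆ := fun a b => rfl
  let f₁ : Module.End R (L ⊗[R] L) := (f - χ₁ • 1).rTensor L
  let f₂ : Module.End R (L ⊗[R] L) := (f - χ₂ • 1).lTensor L
  have h_comm_square : (f - (χ₁ + χ₂) • 1) ∘ₗ g = g.comp (f₁ + f₂) := by
    ext a b
    have hD : f ⁅a, b⁆ = ⁅f a, b⁆ + ⁅a, f b⁆ := by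
      have := D.apply_lie_eq_add a b
      simpa [hf] using this.trans (add_comm _ _)
    simp only [AlgebraTensorModule.curry_apply, TensorProduct.curry_apply,
      LinearMap.coe_restrictScalars, LinearMap.coe_comp, Function.comp_apply,
      LinearMap.add_apply, LinearMap.sub_apply, LinearMap.smul_apply, Module.End.one_apply,
      map_add, hg, f₁, f₂, LinearMap.rTensor_tmul, LinearMap.lTensor_tmul, hD,
      sub_lie, lie_sub, smul_lie, lie_smul, add_smul]
    abel
  rw [Module.End.mem_maxGenEigenspace]
  rsuffices ⟨k, hk⟩ : ∃ k : ℕ, ((f₁ + f₂) ^ k) (x ⊗ₜ y) = 0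
  · refine ⟨k, ?_⟩
    have h := Module.End.commute_pow_left_of_commute h_comm_square k
    have := congrArg (fun φ : L ⊗[R] L →ₗ[R] L => φ (x ⊗ₜ y)) h
    simp only [LinearMap.coe_comp, Function.comp_apply] at this
    rw [hg] at this
    rw [this, hk, map_zero]
  rw [Module.End.mem_maxGenEigenspace] at hx hy
  obtain ⟨k₁, hk₁⟩ := hx
  obtain ⟨k₂, hk₂⟩ := hy
  have hf_comm : Commute f₁ f₂ := by
    show f₁ ∘ₗ f₂ = f₂ ∘ₗ f₁
    rw [LinearMap.rTensor_comp_lTensor, LinearMap.lTensor_comp_rTensor]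
  refine ⟨k₁ + k₂, ?_⟩
  rw [hf_comm.add_pow']
  simp only [LinearMap.coe_sum, Finset.sum_apply, LinearMap.smul_apply]
  apply Finset.sum_eq_zero
  rintro ⟨i, j⟩ hij
  suffices h0 : (f₁ ^ i * f₂ ^ j) (x ⊗ₜ y) = 0 by rw [h0]; apply smul_zero
  have hija : i + j = k₁ + k₂ := Finset.HasAntidiagonal.mem_antidiagonal.mp hij
  have hpow₁ : ∀ n, k₁ ≤ n → (f₁ ^ n) (x ⊗ₜ[R] y) = 0 := by
    intro n hn
    rw [show f₁ ^ n = ((f - χ₁ • 1) ^ n).rTensor L from LinearMap.rTensor_pow (N := L) _ n,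
      LinearMap.rTensor_tmul, Module.End.pow_map_zero_of_le hn hk₁, zero_tmul]
  have hpow₂ : ∀ n, k₂ ≤ n → (f₂ ^ n) (x ⊗ₜ[R] y) = 0 := by
    intro n hn
    rw [show f₂ ^ n = ((f - χ₂ • 1) ^ n).lTensor L from LinearMap.lTensor_pow (M := L) _ n,
      LinearMap.lTensor_tmul, Module.End.pow_map_zero_of_le hn hk₂, tmul_zero]
  rcases le_or_gt k₁ i with hi | hi
  · rw [(hf_comm.pow_pow i j).eq, Module.End.mul_apply, hpow₁ i hi, map_zero]
  · have hj : k₂ ≤ j := by omega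
    rw [Module.End.mul_apply, hpow₂ j hj, map_zero]

/-- For a derivation `D` (on the complexification) and a nonzero eigenvalue `α` with zero real
part, the sum `𝔤^α = ⊕_{j ≥ 1} 𝔤_{jα}` of the generalized eigenspaces of the positive integer
multiples of `α` is a nilpotent Lie subalgebra. -/
theorem stmt_19 (L : Type*) [LieRing L] [LieAlgebra ℂ L] [FiniteDimensional ℂ L]
    (D : LieDerivation ℂ L L) (α : ℂ) (hα : α ≠ 0) (hre : α.re = 0)
    (heig : Module.End.HasEigenvalue D.toLinearMap α) :
    ∃ K : LieSubalgebra ℂ L,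
      (K.toSubmodule = ⨆ (j : ℕ) (_ : 1 ≤ j),
          Module.End.maxGenEigenspace D.toLinearMap ((j : ℂ) * α)) ∧
      LieRing.IsNilpotent K := by
  set f : Module.End ℂ L := D.toLinearMap with hf
  set N : ℕ → Submodule ℂ L := fun j => f.maxGenEigenspace ((j : ℂ) * α) with hN
  set S : ℕ → Submodule ℂ L := fun m => ⨆ (j : ℕ) (_ : m ≤ j), N j with hS
  have hNS : ∀ j m, m ≤ j → N j ≤ S m := fun j m h =>
    le_iSup_of_le j (le_iSup_of_le h le_rfl)
  have hmono : ∀ m n, m ≤ n → S n ≤ S m := by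
    intro m n hmn
    exact iSup₂_le fun j hj => hNS j m (hmn.trans hj)
  -- the main bracket relation
  have hbr : ∀ m n (x y : L), x ∈ S m → y ∈ S n → ⁅x, y⁆ ∈ S (m + n) := by
    intro m n x y hx hy
    rw [hS] at hx
    simp only [iSup_subtype'] at hx
    refine Submodule.iSup_induction _ (motive := fun z => ⁅z, y⁆ ∈ S (m + n)) hx ?_ (by simp) ?_
    · rintro ⟨j, hj⟩ x hxj
      rw [hS] at hy
      simp only [iSup_subtype'] at hy
      refine Submodule.iSup_induction _ (motive := fun z => ⁅x, z⁆ ∈ S (m + n)) hy ?_ (by simp) ?_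
      · rintro ⟨k, hk⟩ y hyk
        have h := aux_lie_mem_maxGenEigenspace D hxj hyk
        have hcast : (j : ℂ) * α + (k : ℂ) * α = ((j + k : ℕ) : ℂ) * α := by
          push_cast; ring
        rw [hcast] at h
        exact hNS (j + k) (m + n) (by omega) h
      · intro a b ha hb
        rw [lie_add]; exact Submodule.add_mem _ ha hb
    · intro a b ha hb
      rw [add_lie]; exact Submodule.add_mem _ ha hb
  -- finiteness: S vanishes eventually
  have hfin : ∃ M : ℕ, 1 ≤ M ∧ S M = ⊥ := by
    have hev : ∀ j : ℕ, N j ≠ ⊥ → f.HasEigenvalue ((j : ℂ) * α) := by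
      intro j hj
      have : f.HasUnifEigenvalue ((j : ℂ) * α) ⊤ := hj
      exact Module.End.hasUnifEigenvalue_iff_hasUnifEigenvalue_one (by simp) |>.mp this
    have hT : {j : ℕ | N j ≠ ⊥}.Finite := by
      have hinj : Function.Injective (fun j : ℕ => (j : ℂ) * α) := by
        intro a b hab
        simp only [mul_eq_mul_right_iff, hα, or_false] at hab
        exact_mod_cast hab
      have : {j : ℕ | N j ≠ ⊥} ⊆ (fun j : ℕ => (j : ℂ) * α) ⁻¹' f.HasEigenvalue := by
        intro j hj; exact hev j hj
      exact Set.Finite.subset (Set.Finite.preimage hinj.injOn f.finite_hasEigenvalue) this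
    obtain ⟨M, hM⟩ := hT.bddAbove
    refine ⟨M + 1, by omega, ?_⟩
    rw [hS]
    refine iSup₂_eq_bot.mpr fun j hj => ?_
    by_contra hne
    exact absurd (hM hne) (by omega)
  -- build the Lie subalgebra
  let K : LieSubalgebra ℂ L :=
    { S 1 with
      lie_mem' := fun {x y} hx hy => hmono 1 2 (by omega) (hbr 1 1 x y hx hy) }
  have hKmem : ∀ x : K, (x : L) ∈ S 1 := fun x => x.2
  refine ⟨K, rfl, ?_⟩
  -- nilpotency via Engel's theorem
  rw [LieAlgebra.isNilpotent_iff_forall (R := ℂ)]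
  intro x
  obtain ⟨M, hM1, hMbot⟩ := hfin
  -- iterated ad lands in deep filtration
  have key : ∀ (n : ℕ) (y : K), (((LieAlgebra.ad ℂ K x) ^ n) y : L) ∈ S (n + 1) := by
    intro n
    induction n with
    | zero => intro y; simpa using hKmem y
    | succ n ih =>
      intro y
      have h1 : ((LieAlgebra.ad ℂ K x ^ (n + 1)) y : L)
          = ⁅(x : L), (((LieAlgebra.ad ℂ K x) ^ n) y : L)⁆ := by
        rw [pow_succ']
        rfl
      rw [h1]
      have := hbr 1 (n + 1) _ _ (hKmem x) (ih y)
      convert this using 2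
      omega
  refine ⟨M, ?_⟩
  ext y
  have h := key M y
  have h2 : (((LieAlgebra.ad ℂ K x) ^ M) y : L) = 0 := by
    have : S (M + 1) ≤ S M := hmono M (M + 1) (by omega)
    have := this h
    rw [hMbot] at this
    simpa using this
  simpa [ZeroMemClass.coe_eq_zero] using h2
end
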